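/- arXiv:1301.0989 — 2 statements merged into one kernel-verified Lean document; each statement's English description precedes it below -/
import Mathlib

section
/- Let α ∈ Sⁿ, let r_α be any element of G preserving ℝ^{n+1}×{0} with r_α(α,1) = e₁, let (p,q) ∈ ℤ^{n+1} × ℕ with p/q ∈ Sⁿ, let ε > 0, and let N ≥ q be such that ‖α − p/q‖ < ε/√(qN). Then there exists t > 0 such that ‖g_t r_α(p,q)‖ < ε√(n+1)·√(q/N), where (p,q) ∈ ℝ^{n+2} is the vector with first n+1 coordinates p and last coordinate q. -/
open MeasureTheory

/-- The unit Euclidean sphere `Sⁿ` in `ℝ^{n+1}` (the ambient space `Fin (n+1) → ℝ`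
carries the supremum norm). -/
noncomputable def unitSphere (n : ℕ) : Set (Fin (n + 1) → ℝ) :=
  {x | ∑ i, x i ^ 2 = 1}

/-- The rational point `p/q` in `ℝ^{n+1}`. -/
noncomputable def ratPt (n : ℕ) (p : Fin (n + 1) → ℤ) (q : ℕ) : Fin (n + 1) → ℝ :=
  fun i => (p i : ℝ) / (q : ℝ)

/-- The quadratic form `Q(x) = x₁² + ⋯ + x_{n+1}² − x_{n+2}²` on `ℝ^{n+2}`. -/
noncomputable def Qform (n : ℕ) (x : Fin (n + 2) → ℝ) : ℝ :=
  (∑ i : Fin (n + 1), x i.castSucc ^ 2) - x (Fin.last (n + 1)) ^ 2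

/-- `Λ₀ = ℤ^{n+2} ∩ L`, the integer points of the light cone `L = {Q = 0}`. -/
noncomputable def Lambda0 (n : ℕ) : Set (Fin (n + 2) → ℝ) :=
  {v | (∀ i, ∃ m : ℤ, v i = (m : ℝ)) ∧ Qform n v = 0}

/-- Membership in `G = SO(Q)`: determinant one and preservation of `Q`. -/
def isSOQ (n : ℕ) (g : Matrix (Fin (n + 2)) (Fin (n + 2)) ℝ) : Prop :=
  g.det = 1 ∧ ∀ x, Qform n (g.mulVec x) = Qform n x

/-- The one-parameter diagonal flow `g_t`. -/
noncomputable def gFlow (n : ℕ) (t : ℝ) : Matrix (Fin (n + 2)) (Fin (n + 2)) ℝ :=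
  Matrix.of fun i j =>
    if i = 0 ∧ j = 0 then Real.cosh t
    else if i = 0 ∧ j = Fin.last (n + 1) then -Real.sinh t
    else if i = Fin.last (n + 1) ∧ j = 0 then -Real.sinh t
    else if i = Fin.last (n + 1) ∧ j = Fin.last (n + 1) then Real.cosh t
    else if i = j then 1 else 0

/-- The vector `e₁ = (1,0,…,0,1) ∈ L`. -/
noncomputable def eOne (n : ℕ) : Fin (n + 2) → ℝ :=
  fun i => if i = 0 then 1 else if i = Fin.last (n + 1) then 1 else 0

/-- The embedding `α ↦ (α,1)` of `Sⁿ` into the light cone. -/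
noncomputable def embedS (n : ℕ) (α : Fin (n + 1) → ℝ) : Fin (n + 2) → ℝ :=
  Fin.snoc α 1

/-- The vector `(p,q) ∈ ℝ^{n+2}` with first `n+1` coordinates `p` and last coordinate `q`. -/
noncomputable def vecPQ (n : ℕ) (p : Fin (n + 1) → ℤ) (q : ℕ) : Fin (n + 2) → ℝ :=
  Fin.snoc (fun i => (p i : ℝ)) (q : ℝ)

/-- `g` preserves the subspace `ℝ^{n+1} × {0}`. -/
def preservesHyperplane (n : ℕ) (g : Matrix (Fin (n + 2)) (Fin (n + 2)) ℝ) : Prop :=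
  ∀ x : Fin (n + 2) → ℝ, x (Fin.last (n + 1)) = 0 → g.mulVec x (Fin.last (n + 1)) = 0

/-- `ω(Λ)`: the infimum of the (sup) norms of the nonzero vectors of `Λ`. -/
noncomputable def omegaMin (n : ℕ) (Λ : Set (Fin (n + 2) → ℝ)) : ℝ :=
  sInf ((fun v => ‖v‖) '' {v | v ∈ Λ ∧ v ≠ 0})

/-- The lattice `g Λ₀`. -/
noncomputable def latticeOf (n : ℕ) (g : Matrix (Fin (n + 2)) (Fin (n + 2)) ℝ) :
    Set (Fin (n + 2) → ℝ) :=
  (fun v => g.mulVec v) '' Lambda0 n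


lemma abs_lt_of_sq_lt' (x r : ℝ) (hr : 0 < r) (h : x^2 < r^2) : |x| < r := by
  nlinarith [sq_abs x, abs_nonneg x]

lemma aux_t (a b R : ℝ) (hR : 0 < R) (hb : |b| < R/2) (hab : |a*b| < R^2/4) :
    ∃ t : ℝ, 0 < t ∧ |a| * Real.exp (-t) + |b| * Real.exp t < R := by
  rcases eq_or_ne b 0 with rfl | hb0
  · refine ⟨max 1 (Real.log ((|a|+1)/R) + 1), lt_of_lt_of_le one_pos (le_max_left _ _), ?_⟩
    have h1 : Real.log ((|a|+1)/R) + 1 ≤ max 1 (Real.log ((|a|+1)/R) + 1) := le_max_right _ _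
    have hpos : 0 < (|a|+1)/R := by positivity
    have h2 : Real.exp (-(max 1 (Real.log ((|a|+1)/R) + 1))) ≤ Real.exp (-(Real.log ((|a|+1)/R) + 1)) := by
      apply Real.exp_le_exp.2; linarith
    have h3 : Real.exp (-(Real.log ((|a|+1)/R) + 1)) = R/(|a|+1) * Real.exp (-1) := by
      rw [neg_add, Real.exp_add, Real.exp_neg, Real.exp_log hpos]
      field_simp
    have he : Real.exp (-1 : ℝ) < 1 := by
      rw [Real.exp_lt_one_iff]; norm_num
    have ha0 : (0:ℝ) ≤ |a| := abs_nonneg a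
    have hRa : 0 < |a| + 1 := by linarith
    rw [h3] at h2
    simp only [abs_zero, zero_mul, add_zero]
    have key : |a| * (R/(|a|+1) * Real.exp (-1)) < R := by
      rw [div_mul_eq_mul_div, mul_div_assoc', div_lt_iff₀ hRa]
      have h4 : |a| * R * Real.exp (-1) ≤ |a| * R :=
        mul_le_of_le_one_right (by positivity) he.le
      nlinarith
    calc |a| * Real.exp (-(max 1 (Real.log ((|a|+1)/R) + 1)))
        ≤ |a| * (R/(|a|+1) * Real.exp (-1)) := mul_le_mul_of_nonneg_left h2 ha0
      _ < R := key
  · have hbpos : 0 < |b| := abs_pos.2 hb0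
    have h1 : 1 < R/(2*|b|) := by rw [lt_div_iff₀ (by positivity)]; linarith
    refine ⟨Real.log (R/(2*|b|)), Real.log_pos h1, ?_⟩
    rw [Real.exp_log (by positivity), Real.exp_neg, Real.exp_log (by positivity)]
    have hab' : |a| * |b| < R^2/4 := by rw [← abs_mul]; exact hab
    have hb2 : |b| * (R / (2*|b|)) = R/2 := by field_simp
    rw [hb2]
    have h2 : |a| * (R / (2 * |b|))⁻¹ = 2 * (|a| * |b|) / R := by
      field_simp
    rw [h2]
    have h3 : 2 * (|a| * |b|) / R < R/2 := by
      rw [div_lt_iff₀ hR]; nlinarith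
    linarith

lemma last_ne_zero (n : ℕ) : Fin.last (n+1) ≠ (0 : Fin (n+2)) := Fin.last_pos.ne'

lemma gFlow_mulVec (n : ℕ) (t : ℝ) (w : Fin (n+2) → ℝ) (i : Fin (n+2)) :
    (gFlow n t).mulVec w i =
      if i = 0 then Real.cosh t * w 0 - Real.sinh t * w (Fin.last (n+1))
      else if i = Fin.last (n+1) then -(Real.sinh t) * w 0 + Real.cosh t * w (Fin.last (n+1))
      else w i := by
  have hl0 : Fin.last (n+1) ≠ (0 : Fin (n+2)) := last_ne_zero n
  rcases eq_or_ne i 0 with rfl | hi0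
  · simp only [if_pos rfl]
    rw [Matrix.mulVec, dotProduct]
    have : ∀ j : Fin (n+2), gFlow n t 0 j * w j =
        (if j = 0 then Real.cosh t * w j else 0) + (if j = Fin.last (n+1) then -Real.sinh t * w j else 0) := by
      intro j
      rcases eq_or_ne j 0 with rfl | hj0
      · simp [gFlow, hl0.symm]
      · rcases eq_or_ne j (Fin.last (n+1)) with rfl | hjl
        · simp [gFlow, hl0, hl0.symm]
        · simp [gFlow, hj0, hjl, hl0.symm, Ne.symm hj0]
    rw [Finset.sum_congr rfl (fun j _ => this j), Finset.sum_add_distrib]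
    rw [Finset.sum_ite_eq' Finset.univ (0 : Fin (n+2)) (fun j => Real.cosh t * w j)]
    rw [Finset.sum_ite_eq' Finset.univ (Fin.last (n+1)) (fun j => -Real.sinh t * w j)]
    simp; ring
  · rcases eq_or_ne i (Fin.last (n+1)) with rfl | hil
    · simp only [if_neg hl0, if_pos rfl]
      rw [Matrix.mulVec, dotProduct]
      have : ∀ j : Fin (n+2), gFlow n t (Fin.last (n+1)) j * w j =
          (if j = 0 then -Real.sinh t * w j else 0) + (if j = Fin.last (n+1) then Real.cosh t * w j else 0) := by
        intro j
        rcases eq_or_ne j 0 with rfl | hj0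
        · simp [gFlow, hl0, hl0.symm]
        · rcases eq_or_ne j (Fin.last (n+1)) with rfl | hjl
          · simp [gFlow, hl0]
          · simp [gFlow, hj0, hjl, hl0, Ne.symm hjl]
      rw [Finset.sum_congr rfl (fun j _ => this j), Finset.sum_add_distrib]
      rw [Finset.sum_ite_eq' Finset.univ (0 : Fin (n+2)) (fun j => -Real.sinh t * w j)]
      rw [Finset.sum_ite_eq' Finset.univ (Fin.last (n+1)) (fun j => Real.cosh t * w j)]
      simp
    · simp only [if_neg hi0, if_neg hil]
      rw [Matrix.mulVec, dotProduct]
      have : ∀ j : Fin (n+2), gFlow n t i j * w j = (if j = i then w j else 0) := by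
        intro j
        rcases eq_or_ne j i with rfl | hji
        · simp [gFlow, hi0, hil]
        · simp [gFlow, hi0, hil, Ne.symm hji, hji]
      rw [Finset.sum_congr rfl (fun j _ => this j)]
      rw [Finset.sum_ite_eq' Finset.univ i (fun j => w j)]
      simp

set_option maxHeartbeats 1000000 in
/-- Lemma (small vector): if `N ≥ q` and `‖α − p/q‖ < ε/√(qN)`, then there exists `t > 0`
with `‖g_t r_α (p,q)‖ < ε √(n+1) √(q/N)`. -/
theorem small_vector (n : ℕ) (hn : 1 ≤ n) (α : Fin (n + 1) → ℝ) (hα : α ∈ unitSphere n)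
    (rα : Matrix (Fin (n + 2)) (Fin (n + 2)) ℝ) (hrG : isSOQ n rα)
    (hrP : preservesHyperplane n rα) (hrα : rα.mulVec (embedS n α) = eOne n)
    (p : Fin (n + 1) → ℤ) (q : ℕ) (hq : 0 < q) (hpq : ratPt n p q ∈ unitSphere n)
    (ε : ℝ) (hε : 0 < ε) (N : ℝ) (hN : (q : ℝ) ≤ N)
    (happ : ‖α - ratPt n p q‖ < ε / Real.sqrt ((q : ℝ) * N)) :
    ∃ t : ℝ, 0 < t ∧
      ‖(gFlow n t * rα).mulVec (vecPQ n p q)‖ <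
        ε * Real.sqrt ((n : ℝ) + 1) * Real.sqrt ((q : ℝ) / N) := by

  classical
  have hq0 : (0:ℝ) < q := by exact_mod_cast hq
  have hqne : (q:ℝ) ≠ 0 := hq0.ne'
  have hN0 : (0:ℝ) < N := lt_of_lt_of_le hq0 hN
  set β := ratPt n p q with hβ
  set u : Fin (n+2) → ℝ := rα.mulVec (embedS n β - embedS n α) with hu
  set w : Fin (n+2) → ℝ := rα.mulVec (vecPQ n p q) with hw
  -- vecPQ = q • embedS β
  have hv : vecPQ n p q = (q:ℝ) • embedS n β := by
    funext i
    refine Fin.lastCases ?_ ?_ i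
    · simp [vecPQ, embedS]
    · intro j
      simp only [vecPQ, embedS, hβ, ratPt, Pi.smul_apply, Fin.snoc_castSucc, smul_eq_mul]
      field_simp
  have hwdec : w = (q:ℝ) • eOne n + (q:ℝ) • u := by
    rw [hw, hv, Matrix.mulVec_smul]
    have hsplit : embedS n β = embedS n α + (embedS n β - embedS n α) := by
      abel
    rw [hsplit, Matrix.mulVec_add, hrα, ← hu, smul_add]
  have hl0 : Fin.last (n+1) ≠ (0 : Fin (n+2)) := last_ne_zero n
  -- u vanishes at the last coordinate
  have hulast : u (Fin.last (n+1)) = 0 := by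
    rw [hu]
    apply hrP
    simp [embedS, Fin.snoc_last]
  -- coordinates of w
  have heOne0 : eOne n 0 = 1 := by simp [eOne]
  have heOnel : eOne n (Fin.last (n+1)) = 1 := by simp [eOne, hl0]
  have hwlast : w (Fin.last (n+1)) = (q:ℝ) := by
    rw [hwdec]; simp [heOnel, hulast]
  have hw0 : w 0 = (q:ℝ) + (q:ℝ) * u 0 := by
    rw [hwdec]; simp [heOne0]
  have hwmid : ∀ j : Fin (n+1), j ≠ 0 → w j.castSucc = (q:ℝ) * u j.castSucc := by
    intro j hj
    have h1 : (j.castSucc : Fin (n+2)) ≠ 0 := by simpa using hj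
    have h2 : (j.castSucc : Fin (n+2)) ≠ Fin.last (n+1) := (Fin.castSucc_lt_last j).ne
    rw [hwdec]
    simp [eOne, h1, h2]
  -- the quantity d2
  set d2 : ℝ := ∑ i : Fin (n+1), (u i.castSucc)^2 with hd2def
  have hQu : d2 = ∑ i, (β i - α i)^2 := by
    have h := hrG.2 (embedS n β - embedS n α)
    rw [← hu] at h
    simp only [Qform, hulast] at h
    have hdl : (embedS n β - embedS n α) (Fin.last (n+1)) = 0 := by
      simp [embedS, Fin.snoc_last]
    have hdc : ∀ i : Fin (n+1), (embedS n β - embedS n α) i.castSucc = β i - α i := by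
      intro i; simp [embedS, Fin.snoc_castSucc]
    rw [hdl] at h
    simp only [hdc] at h
    have := h
    simpa [hd2def] using this
  have hd2nonneg : 0 ≤ d2 := Finset.sum_nonneg fun i _ => sq_nonneg _
  -- Q(w) = 0
  have hpq' : ∑ i, ((p i:ℝ)/(q:ℝ))^2 = 1 := hpq
  have hsumP : ∑ i, ((p i:ℝ))^2 = (q:ℝ)^2 := by
    simp only [div_pow] at hpq'
    rw [← Finset.sum_div, div_eq_one_iff_eq (by positivity)] at hpq'
    exact hpq'
  have hQv : Qform n (vecPQ n p q) = 0 := by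
    simp only [Qform, vecPQ, Fin.snoc_castSucc, Fin.snoc_last]
    rw [hsumP]; ring
  have hQw : (∑ i : Fin (n+1), (w i.castSucc)^2) = (q:ℝ)^2 := by
    have h := hrG.2 (vecPQ n p q)
    rw [← hw, hQv] at h
    simp only [Qform, hwlast] at h
    linarith
  -- the target bound R
  set R : ℝ := ε * Real.sqrt ((n:ℝ) + 1) * Real.sqrt ((q:ℝ)/N) with hRdef
  have hR : 0 < R := by
    apply mul_pos (mul_pos hε (Real.sqrt_pos.2 (by positivity)))
    exact Real.sqrt_pos.2 (div_pos hq0 hN0)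
  have hR2 : R^2 = ((n:ℝ)+1) * ε^2 * ((q:ℝ)/N) := by
    rw [hRdef, mul_pow, mul_pow, Real.sq_sqrt (by positivity : (0:ℝ) ≤ (n:ℝ)+1),
      Real.sq_sqrt (le_of_lt (div_pos hq0 hN0))]
    ring
  set C : ℝ := ε / Real.sqrt ((q:ℝ) * N) with hCdef
  have hsqrtqN : 0 < Real.sqrt ((q:ℝ)*N) := Real.sqrt_pos.2 (by positivity)
  have hC2 : C^2 = ε^2 / ((q:ℝ)*N) := by
    rw [hCdef, div_pow, Real.sq_sqrt (by positivity : (0:ℝ) ≤ (q:ℝ)*N)]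
  -- d2 < (n+1) C^2
  have hd2lt : d2 < ((n:ℝ)+1) * C^2 := by
    rw [hQu]
    have hterm : ∀ i : Fin (n+1), (β i - α i)^2 < C^2 := by
      intro i
      have h1 : |(α - β) i| ≤ ‖α - β‖ := by
        have := norm_le_pi_norm (α - β) i
        rwa [Real.norm_eq_abs] at this
      have h2 : |(α - β) i| < C := lt_of_le_of_lt h1 happ
      have h3 : |(α - β) i|^2 < C^2 :=
        pow_lt_pow_left₀ h2 (abs_nonneg _) (by norm_num)
      rw [sq_abs] at h3
      have h4 : (β i - α i)^2 = ((α - β) i)^2 := by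
        simp [Pi.sub_apply]; ring
      rw [h4]; exact h3
    calc (∑ i, (β i - α i)^2) < ∑ _i : Fin (n+1), C^2 :=
          Finset.sum_lt_sum_of_nonempty Finset.univ_nonempty fun i _ => hterm i
      _ = ((n:ℝ)+1) * C^2 := by
          rw [Finset.sum_const, Finset.card_univ, Fintype.card_fin, nsmul_eq_mul]
          push_cast; ring
  -- key squared inequality
  have hKey : (q:ℝ)^2 * d2 < R^2 := by
    have h1 : (q:ℝ)^2 * d2 < (q:ℝ)^2 * (((n:ℝ)+1) * C^2) :=
      mul_lt_mul_of_pos_left hd2lt (by positivity)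
    have h2 : (q:ℝ)^2 * (((n:ℝ)+1) * C^2) = R^2 := by
      rw [hC2, hR2]; field_simp
    linarith
  -- a, b
  set a : ℝ := (w 0 + q)/2 with hadef
  set b : ℝ := (w 0 - q)/2 with hbdef
  set M' : ℝ := ∑ i ∈ Finset.univ.erase (0 : Fin (n+1)), (w i.castSucc)^2 with hM'def
  have hsplitsum : (w (0:Fin (n+2)))^2 + M' = (q:ℝ)^2 := by
    have h := Finset.add_sum_erase (Finset.univ : Finset (Fin (n+1)))
      (fun i : Fin (n+1) => (w i.castSucc)^2) (Finset.mem_univ (0 : Fin (n+1)))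
    simp only [Fin.castSucc_zero] at h
    rw [hM'def]
    rw [h]
    exact hQw
  have hM'nonneg : 0 ≤ M' :=
    Finset.sum_nonneg fun i _ => sq_nonneg _
  have hM'le : M' ≤ (q:ℝ)^2 * d2 := by
    have h1 : M' = ∑ i ∈ Finset.univ.erase (0 : Fin (n+1)), (q:ℝ)^2 * (u i.castSucc)^2 := by
      rw [hM'def]
      refine Finset.sum_congr rfl fun i hi => ?_
      rw [hwmid i (Finset.ne_of_mem_erase hi)]; ring
    rw [h1, ← Finset.mul_sum]
    apply mul_le_mul_of_nonneg_left _ (by positivity)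
    rw [hd2def]
    exact Finset.sum_le_sum_of_subset_of_nonneg (Finset.erase_subset _ _)
      fun i _ _ => sq_nonneg _
  have h4ab : 4*(a*b) = (w 0)^2 - (q:ℝ)^2 := by
    rw [hadef, hbdef]; ring
  have habval : a * b = -M'/4 := by linarith only [h4ab, hsplitsum]
  have hab : |a * b| < R^2/4 := by
    rw [habval, abs_div, abs_neg, abs_of_nonneg hM'nonneg]
    have : |(4:ℝ)| = 4 := by norm_num
    rw [this]
    linarith only [lt_of_le_of_lt hM'le hKey]
  have hu0sq : (u 0)^2 ≤ d2 := by
    rw [hd2def]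
    have h := Finset.single_le_sum (f := fun i : Fin (n+1) => (u i.castSucc)^2)
      (fun i _ => sq_nonneg _) (Finset.mem_univ (0 : Fin (n+1)))
    simpa using h
  have hbabs : |b| < R/2 := by
    apply abs_lt_of_sq_lt' _ _ (by linarith only [hR])
    have hbeq : b = (q:ℝ) * u 0 / 2 := by rw [hbdef, hw0]; ring
    have hb2 : b^2 = (q:ℝ)^2 * (u 0)^2 / 4 := by rw [hbeq]; ring
    have h1 : (q:ℝ)^2 * (u 0)^2 ≤ (q:ℝ)^2 * d2 :=
      mul_le_mul_of_nonneg_left hu0sq (by positivity)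
    have h2 : (R/2)^2 = R^2/4 := by ring
    linarith only [hb2, h1, hKey, h2]
  obtain ⟨t, ht, hlt⟩ := aux_t a b R hR hbabs hab
  refine ⟨t, ht, ?_⟩
  rw [← Matrix.mulVec_mulVec, ← hw]
  apply (pi_norm_lt_iff hR).2
  intro i
  rw [Real.norm_eq_abs, gFlow_mulVec]
  rcases eq_or_ne i 0 with rfl | hi0
  · rw [if_pos rfl, hwlast]
    have hval : Real.cosh t * w 0 - Real.sinh t * (q:ℝ)
        = a * Real.exp (-t) + b * Real.exp t := by
      rw [Real.cosh_eq, Real.sinh_eq, hadef, hbdef]; ring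
    rw [hval]
    calc |a * Real.exp (-t) + b * Real.exp t|
        ≤ |a * Real.exp (-t)| + |b * Real.exp t| := abs_add_le _ _
      _ = |a| * Real.exp (-t) + |b| * Real.exp t := by
          rw [abs_mul, abs_mul, abs_of_pos (Real.exp_pos _), abs_of_pos (Real.exp_pos _)]
      _ < R := hlt
  · rw [if_neg hi0]
    rcases eq_or_ne i (Fin.last (n+1)) with rfl | hil
    · rw [if_pos rfl, hwlast]
      have hval : -Real.sinh t * w 0 + Real.cosh t * (q:ℝ)
          = a * Real.exp (-t) - b * Real.exp t := by
        rw [Real.cosh_eq, Real.sinh_eq, hadef, hbdef]; ring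
      rw [hval]
      calc |a * Real.exp (-t) - b * Real.exp t|
          ≤ |a * Real.exp (-t)| + |b * Real.exp t| := abs_sub _ _
        _ = |a| * Real.exp (-t) + |b| * Real.exp t := by
            rw [abs_mul, abs_mul, abs_of_pos (Real.exp_pos _), abs_of_pos (Real.exp_pos _)]
        _ < R := hlt
    · rw [if_neg hil]
      obtain ⟨j, hj⟩ := Fin.exists_castSucc_eq.2 hil
      have hjne : j ≠ 0 := by
        intro h; rw [h, Fin.castSucc_zero] at hj; exact hi0 hj.symm
      rw [← hj, hwmid j hjne]
      apply abs_lt_of_sq_lt' _ _ hR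
      have h1 : (u j.castSucc)^2 ≤ d2 := by
        have h := Finset.single_le_sum (f := fun i : Fin (n+1) => (u i.castSucc)^2)
          (fun i _ => sq_nonneg _) (Finset.mem_univ j)
        simpa [hd2def] using h
      have h2 : (q:ℝ)^2 * (u j.castSucc)^2 ≤ (q:ℝ)^2 * d2 :=
        mul_le_mul_of_nonneg_left h1 (by positivity)
      have h3 : ((q:ℝ) * u j.castSucc)^2 = (q:ℝ)^2 * (u j.castSucc)^2 := by ring
      linarith only [h2, h3, hKey]
end

section
/- Let α ∈ Sⁿ and let r_α be any element of G preserving ℝ^{n+1}×{0} with r_α(α,1) = e₁. Then α ∈ BA(Sⁿ) if and only if there exists c > 0 such that ‖g_t r_α v‖ ≥ c for every t ≥ 0 and every nonzero v ∈ Λ₀ (equivalently, the forward orbit {g_t r_α Λ₀ : t ≥ 0} is bounded in the space of lattices 𝓛). -/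
open MeasureTheory

/-- `BA(Sⁿ)`: the set of badly approximable points of `Sⁿ`. -/
noncomputable def badlyApproximable (n : ℕ) : Set (Fin (n + 1) → ℝ) :=
  {α | α ∈ unitSphere n ∧ ∃ c > (0 : ℝ), ∀ (p : Fin (n + 1) → ℤ) (q : ℕ), 0 < q →
    ratPt n p q ∈ unitSphere n → c / (q : ℝ) < ‖α - ratPt n p q‖}

/- ======= auxiliary lemmas ======= -/

lemma zero_ne_last (n : ℕ) : (0 : Fin (n + 2)) ≠ Fin.last (n + 1) := by
  simp [Fin.ext_iff]

lemma castSucc_ne_last (n : ℕ) (i : Fin (n + 1)) :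
    (i.castSucc : Fin (n + 2)) ≠ Fin.last (n + 1) :=
  Fin.ne_of_lt (Fin.castSucc_lt_last i)

lemma row_sum_two (n : ℕ) (f : Fin (n + 2) → ℝ)
    (h : ∀ j, j ≠ 0 → j ≠ Fin.last (n + 1) → f j = 0) :
    ∑ j, f j = f 0 + f (Fin.last (n + 1)) := by
  rw [← Finset.sum_pair (zero_ne_last n)]
  refine (Finset.sum_subset (Finset.subset_univ _) ?_).symm
  intro j _ hj
  simp only [Finset.mem_insert, Finset.mem_singleton, not_or] at hj
  exact h j hj.1 hj.2

lemma gFlow_apply_zero (n : ℕ) (t : ℝ) (y : Fin (n + 2) → ℝ) :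
    (gFlow n t).mulVec y 0 = Real.cosh t * y 0 - Real.sinh t * y (Fin.last (n + 1)) := by
  show ∑ j, gFlow n t 0 j * y j = _
  rw [row_sum_two n _ (fun j hj0 hjl => by
    simp [gFlow, hj0, hjl, (zero_ne_last n), Ne.symm hj0])]
  simp [gFlow, zero_ne_last n, Ne.symm (zero_ne_last n)]
  ring

lemma gFlow_apply_last (n : ℕ) (t : ℝ) (y : Fin (n + 2) → ℝ) :
    (gFlow n t).mulVec y (Fin.last (n + 1)) =
      -Real.sinh t * y 0 + Real.cosh t * y (Fin.last (n + 1)) := by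
  show ∑ j, gFlow n t (Fin.last (n + 1)) j * y j = _
  rw [row_sum_two n _ (fun j hj0 hjl => by
    simp [gFlow, hj0, hjl, Ne.symm (zero_ne_last n), Ne.symm hjl])]
  simp [gFlow, zero_ne_last n, Ne.symm (zero_ne_last n)]

lemma gFlow_apply_mid (n : ℕ) (t : ℝ) (y : Fin (n + 2) → ℝ) (i : Fin (n + 1)) (hi : i ≠ 0) :
    (gFlow n t).mulVec y i.castSucc = y i.castSucc := by
  have hk0 : (i.castSucc : Fin (n + 2)) ≠ 0 := by
    simpa [Fin.castSucc_eq_zero_iff] using hi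
  have hkl := castSucc_ne_last n i
  show ∑ j, gFlow n t i.castSucc j * y j = _
  have hrow : ∀ j, gFlow n t i.castSucc j = if i.castSucc = j then 1 else 0 := by
    intro j
    simp [gFlow, hk0, hkl]
  simp_rw [hrow, ite_mul, one_mul, zero_mul]
  simp

noncomputable def Bform (n : ℕ) (x y : Fin (n + 2) → ℝ) : ℝ :=
  (∑ i : Fin (n + 1), x i.castSucc * y i.castSucc) - x (Fin.last (n + 1)) * y (Fin.last (n + 1))

lemma Qform_add (n : ℕ) (x y : Fin (n + 2) → ℝ) :
    Qform n (x + y) = Qform n x + Qform n y + 2 * Bform n x y := by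
  simp only [Qform, Bform, Pi.add_apply]
  have h : ∀ a b : ℝ, (a + b) ^ 2 = a ^ 2 + b ^ 2 + 2 * (a * b) := fun a b => by ring
  simp_rw [h, Finset.sum_add_distrib, ← Finset.mul_sum]
  ring

lemma Bform_mulVec (n : ℕ) (g : Matrix (Fin (n + 2)) (Fin (n + 2)) ℝ)
    (hg : ∀ x, Qform n (g.mulVec x) = Qform n x) (x y : Fin (n + 2) → ℝ) :
    Bform n (g.mulVec x) (g.mulVec y) = Bform n x y := by
  have h1 := hg (x + y)
  rw [Matrix.mulVec_add, Qform_add, Qform_add, hg x, hg y] at h1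
  linarith

lemma row_last_eq_zero (n : ℕ) (rα : Matrix (Fin (n + 2)) (Fin (n + 2)) ℝ)
    (hrP : preservesHyperplane n rα) (j : Fin (n + 2)) (hj : j ≠ Fin.last (n + 1)) :
    rα (Fin.last (n + 1)) j = 0 := by
  have h := hrP (Pi.single j 1) (by simp [Pi.single_eq_of_ne (Ne.symm hj)])
  simpa [Matrix.mulVec_single] using h

lemma mulVec_apply_last (n : ℕ) (α : Fin (n + 1) → ℝ)
    (rα : Matrix (Fin (n + 2)) (Fin (n + 2)) ℝ)
    (hrP : preservesHyperplane n rα) (hrα : rα.mulVec (embedS n α) = eOne n)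
    (x : Fin (n + 2) → ℝ) :
    rα.mulVec x (Fin.last (n + 1)) = x (Fin.last (n + 1)) := by
  have hdiag : rα (Fin.last (n + 1)) (Fin.last (n + 1)) = 1 := by
    have h := congrFun hrα (Fin.last (n + 1))
    have he : eOne n (Fin.last (n + 1)) = 1 := by
      simp [eOne, Ne.symm (zero_ne_last n)]
    rw [he] at h
    have : rα.mulVec (embedS n α) (Fin.last (n + 1))
        = rα (Fin.last (n + 1)) (Fin.last (n + 1)) * embedS n α (Fin.last (n + 1)) := by
      show ∑ k, rα (Fin.last (n + 1)) k * embedS n α k = _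
      exact Finset.sum_eq_single _ (fun k _ hk => by
        rw [row_last_eq_zero n rα hrP k hk, zero_mul]) (by simp)
    rw [this] at h
    simpa [embedS, Fin.snoc_last] using h
  show ∑ k, rα (Fin.last (n + 1)) k * x k = _
  rw [Finset.sum_eq_single (Fin.last (n + 1)) (fun k _ hk => by
    rw [row_last_eq_zero n rα hrP k hk, zero_mul]) (by simp), hdiag, one_mul]

lemma Bform_eOne (n : ℕ) (w : Fin (n + 2) → ℝ) :
    Bform n (eOne n) w = w 0 - w (Fin.last (n + 1)) := by
  have h1 : ∀ i : Fin (n + 1), eOne n i.castSucc * w i.castSucc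
      = if i = 0 then w i.castSucc else 0 := by
    intro i
    by_cases hi : i = 0
    · subst hi; simp [eOne]
    · have hk0 : (i.castSucc : Fin (n + 2)) ≠ 0 := by
        simpa [Fin.castSucc_eq_zero_iff] using hi
      simp [eOne, hk0, Fin.ne_of_lt (Fin.castSucc_lt_last i), hi]
  simp only [Bform]
  rw [Finset.sum_congr rfl (fun i _ => h1 i), Finset.sum_ite_eq' Finset.univ (0 : Fin (n+1))]
  simp [eOne, Ne.symm (zero_ne_last n)]

lemma Bform_embed_vec (n : ℕ) (α : Fin (n + 1) → ℝ) (p : Fin (n + 1) → ℤ) (q : ℕ) :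
    Bform n (embedS n α) (vecPQ n p q) = (∑ i, α i * (p i : ℝ)) - q := by
  simp [Bform, embedS, vecPQ, Fin.snoc_castSucc, Fin.snoc_last]

lemma key_w (n : ℕ) (α : Fin (n + 1) → ℝ)
    (rα : Matrix (Fin (n + 2)) (Fin (n + 2)) ℝ) (hrG : isSOQ n rα)
    (hrP : preservesHyperplane n rα) (hrα : rα.mulVec (embedS n α) = eOne n)
    (p : Fin (n + 1) → ℤ) (q : ℕ) (hpq : ∑ i, (p i : ℝ) ^ 2 = (q : ℝ) ^ 2) :
    rα.mulVec (vecPQ n p q) (Fin.last (n + 1)) = q ∧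
    rα.mulVec (vecPQ n p q) 0 = ∑ i, α i * (p i : ℝ) ∧
    ∑ i : Fin (n + 1), rα.mulVec (vecPQ n p q) i.castSucc ^ 2 = (q : ℝ) ^ 2 := by
  set w := rα.mulVec (vecPQ n p q) with hw
  have hlast : w (Fin.last (n + 1)) = q := by
    rw [hw, mulVec_apply_last n α rα hrP hrα]
    simp [vecPQ, Fin.snoc_last]
  have hB : Bform n (eOne n) w = Bform n (embedS n α) (vecPQ n p q) := by
    rw [← hrα, hw]
    exact Bform_mulVec n rα hrG.2 _ _
  have h0 : w 0 = ∑ i, α i * (p i : ℝ) := by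
    rw [Bform_eOne, Bform_embed_vec, hlast] at hB
    linarith
  have hQ : Qform n w = 0 := by
    rw [hw, hrG.2]
    simp [Qform, vecPQ, Fin.snoc_castSucc, Fin.snoc_last, hpq]
  have hsum : ∑ i : Fin (n + 1), w i.castSucc ^ 2 = (q : ℝ) ^ 2 := by
    have := hQ
    simp only [Qform, hlast] at this
    linarith
  exact ⟨hlast, h0, hsum⟩

lemma lambda0_cases (n : ℕ) (v : Fin (n + 2) → ℝ) (hv : v ∈ Lambda0 n) (hv0 : v ≠ 0) :
    ∃ (p : Fin (n + 1) → ℤ) (q : ℕ), 0 < q ∧ (∑ i, (p i : ℝ) ^ 2 = (q : ℝ) ^ 2) ∧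
      (v = vecPQ n p q ∨ v = -vecPQ n p q) := by
  obtain ⟨hint, hQ⟩ := hv
  choose m hm using hint
  have hQ' : ∑ i : Fin (n + 1), v i.castSucc ^ 2 = v (Fin.last (n + 1)) ^ 2 := by
    simp only [Qform] at hQ; linarith
  have hlast_ne : v (Fin.last (n + 1)) ≠ 0 := by
    intro h0
    apply hv0
    have hall : ∀ i : Fin (n + 1), v i.castSucc = 0 := by
      intro i
      have hsum0 : ∑ i : Fin (n + 1), v i.castSucc ^ 2 = 0 := by rw [hQ', h0]; ring
      have := (Finset.sum_eq_zero_iff_of_nonneg (fun j _ => sq_nonneg (v j.castSucc))).1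
        hsum0 i (Finset.mem_univ i)
      exact pow_eq_zero_iff (by norm_num) |>.1 this
    funext k
    refine Fin.lastCases ?_ ?_ k
    · exact h0
    · exact hall
  set M := m (Fin.last (n + 1)) with hM
  have hMv : v (Fin.last (n + 1)) = (M : ℝ) := hm _
  have hMne : M ≠ 0 := by
    intro h; rw [h] at hMv; simp [hMv] at hlast_ne
  rcases lt_or_gt_of_ne hMne with hneg | hpos
  · -- M < 0 : v = -vecPQ
    have hqR : ((-M).toNat : ℝ) = -(M : ℝ) := by
      have h1 : ((-M).toNat : ℤ) = -M := Int.toNat_of_nonneg (by omega)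
      exact_mod_cast congrArg (fun z : ℤ => (z : ℝ)) h1
    refine ⟨fun i => -m i.castSucc, (-M).toNat, ?_, ?_, Or.inr ?_⟩
    · omega
    · rw [hqR]
      have : ∀ i : Fin (n + 1), ((-m i.castSucc : ℤ) : ℝ) ^ 2 = v i.castSucc ^ 2 := by
        intro i; rw [hm i.castSucc]; push_cast; ring
      rw [Finset.sum_congr rfl (fun i _ => this i), hQ', hMv]; ring
    · funext k
      refine Fin.lastCases ?_ ?_ k
      · simp only [Pi.neg_apply, vecPQ, Fin.snoc_last]
        rw [hMv, hqR]; ring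
      · intro i
        simp only [Pi.neg_apply, vecPQ, Fin.snoc_castSucc]
        rw [hm i.castSucc]; push_cast; ring
  · have hqR : ((M).toNat : ℝ) = (M : ℝ) := by
      have h1 : ((M).toNat : ℤ) = M := Int.toNat_of_nonneg (by omega)
      exact_mod_cast congrArg (fun z : ℤ => (z : ℝ)) h1
    refine ⟨fun i => m i.castSucc, M.toNat, ?_, ?_, Or.inl ?_⟩
    · omega
    · rw [hqR]
      have : ∀ i : Fin (n + 1), ((m i.castSucc : ℤ) : ℝ) ^ 2 = v i.castSucc ^ 2 := by
        intro i; rw [hm i.castSucc]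
      rw [Finset.sum_congr rfl (fun i _ => this i), hQ', hMv]
    · funext k
      refine Fin.lastCases ?_ ?_ k
      · simp only [vecPQ, Fin.snoc_last]
        rw [hMv, hqR]
      · intro i
        simp only [vecPQ, Fin.snoc_castSucc]
        exact hm i.castSucc

lemma sphere_sum_sq (n : ℕ) (p : Fin (n + 1) → ℤ) (q : ℕ) (hq : 0 < q)
    (hs : ratPt n p q ∈ unitSphere n) : ∑ i, (p i : ℝ) ^ 2 = (q : ℝ) ^ 2 := by
  have hq0 : (q : ℝ) ≠ 0 := Nat.cast_ne_zero.2 hq.ne'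
  have := hs
  simp only [unitSphere, ratPt, Set.mem_setOf_eq, div_pow] at this
  rw [← Finset.sum_div] at this
  field_simp at this
  linarith

lemma vecPQ_mem_lambda0 (n : ℕ) (p : Fin (n + 1) → ℤ) (q : ℕ)
    (hpq : ∑ i, (p i : ℝ) ^ 2 = (q : ℝ) ^ 2) : vecPQ n p q ∈ Lambda0 n := by
  constructor
  · intro k
    refine Fin.lastCases ?_ ?_ k
    · exact ⟨(q : ℤ), by simp [vecPQ, Fin.snoc_last]⟩
    · intro i; exact ⟨p i, by simp [vecPQ, Fin.snoc_castSucc]⟩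
  · simp [Qform, vecPQ, Fin.snoc_castSucc, Fin.snoc_last, hpq]

lemma dist_sq_identity (n : ℕ) (α : Fin (n + 1) → ℝ) (hα : ∑ i, α i ^ 2 = 1)
    (p : Fin (n + 1) → ℤ) (q : ℕ) (hq : 0 < q)
    (hpq : ∑ i, (p i : ℝ) ^ 2 = (q : ℝ) ^ 2) :
    ∑ i, (α i - (p i : ℝ) / q) ^ 2 = 2 * ((q : ℝ) - ∑ i, α i * (p i : ℝ)) / q := by
  have hq0 : (q : ℝ) ≠ 0 := Nat.cast_ne_zero.2 hq.ne'
  have hexp : ∀ i, (α i - (p i : ℝ) / q) ^ 2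
      = α i ^ 2 - 2 / q * (α i * (p i : ℝ)) + 1 / (q : ℝ) ^ 2 * (p i : ℝ) ^ 2 := by
    intro i; field_simp; ring
  rw [Finset.sum_congr rfl (fun i _ => hexp i), Finset.sum_add_distrib,
    Finset.sum_sub_distrib, ← Finset.mul_sum, ← Finset.mul_sum, hα, hpq]
  field_simp
  ring

lemma sq_norm_le_sum (n : ℕ) (x : Fin (n + 1) → ℝ) : ‖x‖ ^ 2 ≤ ∑ i, x i ^ 2 := by
  have h : ‖x‖ ≤ Real.sqrt (∑ i, x i ^ 2) := by
    rw [pi_norm_le_iff_of_nonneg (Real.sqrt_nonneg _)]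
    intro i
    rw [Real.norm_eq_abs, ← Real.sqrt_sq_eq_abs]
    exact Real.sqrt_le_sqrt (Finset.single_le_sum (fun j _ => sq_nonneg (x j)) (Finset.mem_univ i))
  calc ‖x‖ ^ 2 ≤ Real.sqrt (∑ i, x i ^ 2) ^ 2 := by nlinarith [norm_nonneg x]
  _ = ∑ i, x i ^ 2 := Real.sq_sqrt (Finset.sum_nonneg fun j _ => sq_nonneg _)

lemma aux_mid (x S c₁ N dq q : ℝ) (hS : 0 ≤ S)
    (hpair : x ^ 2 + (q - S) ^ 2 ≤ q ^ 2)
    (hqS : 2 * q * S ≤ N * dq ^ 2) (h16 : 16 * N * dq ^ 2 ≤ c₁ ^ 2)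
    (hc₁ : 0 < c₁) : |x| ≤ 3 * c₁ / 8 := by
  have hsq : x ^ 2 ≤ c₁ ^ 2 / 16 := by nlinarith
  rw [abs_le]
  constructor <;> nlinarith [sq_nonneg (x + c₁ / 4), sq_nonneg (x - c₁ / 4)]

lemma aux_ab (z c₁ : ℝ) (hz0 : 0 ≤ z) (hz : z ≤ c₁ / 8) (hc₁ : 0 < c₁) :
    |c₁ / 4 - z| ≤ 3 * c₁ / 8 ∧ |c₁ / 4 + z| ≤ 3 * c₁ / 8 := by
  constructor <;> rw [abs_le] <;> constructor <;> linarith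

lemma aux_cb (b Z c : ℝ) (h3 : Z / 2 ≤ b * b) (h4 : c ^ 2 / 2 ≤ Z)
    (hb0 : 0 ≤ b) (hc : 0 < c) : c / 2 ≤ b := by
  nlinarith

lemma aux_h4 (c S d q : ℝ) (h5 : c * c < (q * d) * (q * d))
    (h6 : q * (q * d ^ 2) ≤ q * (2 * S)) : c ^ 2 / 2 ≤ q * S := by
  nlinarith

lemma aux_Sub (X q : ℝ) (hCS : X ^ 2 ≤ q ^ 2) (hq0 : 0 < q) : q - X ≤ 2 * q := by
  nlinarith [sq_nonneg (X + q)]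

lemma aux_h16 (A N c₁ : ℝ) (hA0 : 0 ≤ A) (hN1 : 1 ≤ N)
    (hcon : A * (4 * N) ≤ c₁) : 16 * N * A ^ 2 ≤ c₁ ^ 2 := by
  have h1 : (0:ℝ) ≤ A * (4 * N) := by positivity
  have h2 := mul_self_le_mul_self h1 hcon
  nlinarith [mul_le_mul_of_nonneg_right (by nlinarith : N ≤ N ^ 2) (sq_nonneg A)]
set_option maxHeartbeats 1600000 in
/-- Dynamical characterization of badly approximable points: `α ∈ BA(Sⁿ)` if and only if
there is `c > 0` such that `‖g_t r_α v‖ ≥ c` for all `t ≥ 0` and all nonzero `v ∈ Λ₀`,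
i.e. the forward orbit `{g_t r_α Λ₀ : t ≥ 0}` is bounded in the space of lattices. -/
theorem badlyApproximable_iff_bounded_orbit (n : ℕ) (hn : 1 ≤ n)
    (α : Fin (n + 1) → ℝ) (hα : α ∈ unitSphere n)
    (rα : Matrix (Fin (n + 2)) (Fin (n + 2)) ℝ) (hrG : isSOQ n rα)
    (hrP : preservesHyperplane n rα) (hrα : rα.mulVec (embedS n α) = eOne n) :
    α ∈ badlyApproximable n ↔
      ∃ c : ℝ, 0 < c ∧ ∀ t : ℝ, 0 ≤ t → ∀ v ∈ Lambda0 n, v ≠ 0 →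
        c ≤ ‖(gFlow n t * rα).mulVec v‖ := by
  have hα1 : ∑ i, α i ^ 2 = 1 := hα
  constructor
  · rintro ⟨-, c, hc, hBA⟩
    refine ⟨c / 2, by linarith, ?_⟩
    intro t ht v hv hv0
    obtain ⟨p, q, hq, hpq, hcase⟩ := lambda0_cases n v hv hv0
    have hq0 : (0 : ℝ) < q := by exact_mod_cast hq
    have hmain : c / 2 ≤ ‖(gFlow n t * rα).mulVec (vecPQ n p q)‖ := by
      have hsph : ratPt n p q ∈ unitSphere n := by
        show ∑ i, ((p i : ℝ) / q) ^ 2 = 1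
        simp only [div_pow]
        rw [← Finset.sum_div, hpq]
        field_simp
      have hcd : c / q < ‖α - ratPt n p q‖ := hBA p q hq hsph
      obtain ⟨d, hddef⟩ : ∃ x : ℝ, x = ‖α - ratPt n p q‖ := ⟨_, rfl⟩
      rw [← hddef] at hcd
      have hd0 : 0 < d := lt_trans (div_pos hc hq0) hcd
      obtain ⟨S, hSdef⟩ : ∃ x : ℝ, x = (q : ℝ) - ∑ i, α i * (p i : ℝ) := ⟨_, rfl⟩
      have hid : ∑ i, (α i - (p i : ℝ) / q) ^ 2 = 2 * S / q := by
        rw [hSdef]; exact dist_sq_identity n α hα1 p q hq hpq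
      have hdle : d ^ 2 ≤ ∑ i, (α i - (p i : ℝ) / q) ^ 2 := by
        rw [hddef]
        simpa [ratPt] using sq_norm_le_sum n (α - ratPt n p q)
      have hS_lb : (q : ℝ) * d ^ 2 ≤ 2 * S := by
        rw [hid, le_div_iff₀ hq0] at hdle
        nlinarith
      have hCS : (∑ i, α i * (p i : ℝ)) ^ 2 ≤ (q : ℝ) ^ 2 := by
        have h1 := Finset.sum_mul_sq_le_sq_mul_sq Finset.univ α (fun i => (p i : ℝ))
        simpa [hα1, hpq] using h1
      have hS_ub : S ≤ 2 * q := by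
        rw [hSdef]
        exact aux_Sub _ _ hCS hq0
      have hS_pos : 0 < S := by nlinarith [hS_lb, mul_pos hq0 (pow_pos hd0 2)]
      obtain ⟨hwl, hw0, hwsum⟩ := key_w n α rα hrG hrP hrα p q hpq
      obtain ⟨w, hwdef⟩ : ∃ x, x = rα.mulVec (vecPQ n p q) := ⟨_, rfl⟩
      rw [← hwdef] at hwl hw0 hwsum
      have hw0' : w 0 = (q : ℝ) - S := by rw [hw0, hSdef]; ring
      have hbexp : (gFlow n t).mulVec w (Fin.last (n + 1))
          = (q : ℝ) * Real.exp (-t) + S * ((Real.exp t - Real.exp (-t)) / 2) := by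
        rw [gFlow_apply_last, hw0', hwl, Real.sinh_eq, Real.cosh_eq]
        ring
      obtain ⟨b, hbdef⟩ : ∃ x, x = (gFlow n t).mulVec w (Fin.last (n + 1)) := ⟨_, rfl⟩
      rw [← hbdef] at hbexp
      have heet : Real.exp (-t) ≤ Real.exp t := Real.exp_le_exp.2 (by linarith)
      have hb1 : (q : ℝ) * Real.exp (-t) ≤ b := by
        rw [hbexp]; nlinarith [hS_pos, heet]
      have hb2 : S * Real.exp t / 2 ≤ b := by
        rw [hbexp]
        nlinarith [mul_nonneg (by linarith : (0:ℝ) ≤ (q : ℝ) - S / 2)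
          (Real.exp_pos (-t)).le]
      have hb0 : (0 : ℝ) ≤ b := le_trans (by positivity) hb1
      have hee : Real.exp (-t) * Real.exp t = 1 := by
        rw [← Real.exp_add]; simp
      have h3 : (q : ℝ) * S / 2 ≤ b * b := by
        have hmm : ((q : ℝ) * Real.exp (-t)) * (S * Real.exp t / 2) ≤ b * b :=
          mul_le_mul hb1 hb2 (by positivity) hb0
        have heq : ((q : ℝ) * Real.exp (-t)) * (S * Real.exp t / 2)
            = (q : ℝ) * S / 2 * (Real.exp (-t) * Real.exp t) := by ring
        rw [heq, hee, mul_one] at hmm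
        exact hmm
      have hqd : c < (q : ℝ) * d := by rw [div_lt_iff₀ hq0] at hcd; linarith
      have h5 : c * c < ((q : ℝ) * d) * ((q : ℝ) * d) := mul_self_lt_mul_self hc.le hqd
      have h4 : c ^ 2 / 2 ≤ (q : ℝ) * S :=
        aux_h4 c S d q h5 (by nlinarith [mul_le_mul_of_nonneg_left hS_lb hq0.le])
      have hcb : c / 2 ≤ b := aux_cb b ((q : ℝ) * S) c h3 h4 hb0 hc
      have hfin : c / 2 ≤ ‖(gFlow n t).mulVec w‖ := by
        refine le_trans hcb (le_trans (le_abs_self b) ?_)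
        rw [hbdef]
        simpa using norm_le_pi_norm ((gFlow n t).mulVec w) (Fin.last (n + 1))
      rw [← Matrix.mulVec_mulVec]
      rw [hwdef] at hfin
      exact hfin
    rcases hcase with rfl | rfl
    · exact hmain
    · rw [Matrix.mulVec_neg, norm_neg]; exact hmain
  · rintro ⟨c, hc, hbound⟩
    obtain ⟨c₁, hc₁def⟩ : ∃ x : ℝ, x = min c 1 := ⟨_, rfl⟩
    have hc₁pos : 0 < c₁ := hc₁def ▸ lt_min hc one_pos
    have hc₁le1 : c₁ ≤ 1 := hc₁def ▸ min_le_right _ _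
    have hc₁lec : c₁ ≤ c := hc₁def ▸ min_le_left _ _
    obtain ⟨N, hNdef⟩ : ∃ x : ℝ, x = (n : ℝ) + 1 := ⟨_, rfl⟩
    have hN1 : (1 : ℝ) ≤ N := by
      have : (0 : ℝ) ≤ (n : ℝ) := Nat.cast_nonneg n
      rw [hNdef]; linarith
    have hNpos : (0 : ℝ) < N := by linarith
    refine ⟨hα, c₁ / (4 * N), by positivity, ?_⟩
    intro p q hq hsph
    by_contra hcon
    push_neg at hcon
    have hq0 : (0 : ℝ) < q := by exact_mod_cast hq
    have hq1 : (1 : ℝ) ≤ q := by exact_mod_cast hq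
    have hpq := sphere_sum_sq n p q hq hsph
    obtain ⟨d, hddef⟩ : ∃ x : ℝ, x = ‖α - ratPt n p q‖ := ⟨_, rfl⟩
    rw [← hddef] at hcon
    have hd0 : (0 : ℝ) ≤ d := hddef ▸ norm_nonneg _
    rw [le_div_iff₀ hq0, le_div_iff₀ (by positivity : (0:ℝ) < 4 * N)] at hcon
    -- hcon : d * q * (4 * N) ≤ c₁
    obtain ⟨S, hSdef⟩ : ∃ x : ℝ, x = (q : ℝ) - ∑ i, α i * (p i : ℝ) := ⟨_, rfl⟩
    have hid : ∑ i, (α i - (p i : ℝ) / q) ^ 2 = 2 * S / q := by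
      rw [hSdef]; exact dist_sq_identity n α hα1 p q hq hpq
    have hcoordd : ∀ i, (α i - (p i : ℝ) / q) ^ 2 ≤ d ^ 2 := by
      intro i
      have h1 := norm_le_pi_norm (α - ratPt n p q) i
      rw [Real.norm_eq_abs] at h1
      have h2 : |α i - (p i : ℝ) / q| ≤ d := by
        rw [hddef]; simpa [ratPt] using h1
      calc (α i - (p i : ℝ) / q) ^ 2 = |α i - (p i : ℝ) / q| ^ 2 := (sq_abs _).symm
        _ ≤ d ^ 2 := by nlinarith [abs_nonneg (α i - (p i : ℝ) / q)]
    have hsum_le : ∑ i, (α i - (p i : ℝ) / q) ^ 2 ≤ N * d ^ 2 := by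
      calc ∑ i, (α i - (p i : ℝ) / q) ^ 2 ≤ ∑ _i : Fin (n + 1), d ^ 2 :=
            Finset.sum_le_sum fun i _ => hcoordd i
        _ = N * d ^ 2 := by
            rw [Finset.sum_const, Finset.card_univ, hNdef]
            simp [nsmul_eq_mul]
    have hS_nonneg : (0 : ℝ) ≤ S := by
      have h0 : (0 : ℝ) ≤ ∑ i, (α i - (p i : ℝ) / q) ^ 2 :=
        Finset.sum_nonneg fun i _ => sq_nonneg _
      rw [hid, le_div_iff₀ hq0] at h0
      nlinarith
    have hS2q : 2 * S ≤ N * d ^ 2 * q := by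
      rw [hid, div_le_iff₀ hq0] at hsum_le
      linarith
    obtain ⟨T, hTdef⟩ : ∃ x : ℝ, x = Real.log (4 * q / c₁) := ⟨_, rfl⟩
    have h4q : (0 : ℝ) < 4 * q / c₁ := by positivity
    have hT4 : Real.exp T = 4 * q / c₁ := by rw [hTdef]; exact Real.exp_log h4q
    have hT0 : (0 : ℝ) ≤ T := by
      rw [hTdef]
      exact Real.log_nonneg (by rw [le_div_iff₀ hc₁pos]; nlinarith)
    have hTneg : Real.exp (-T) = c₁ / (4 * q) := by rw [Real.exp_neg, hT4, inv_div]
    have hqeT : (q : ℝ) * Real.exp (-T) = c₁ / 4 := by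
      rw [hTneg]; field_simp
    have h16 : 16 * N * (d * q) ^ 2 ≤ c₁ ^ 2 :=
      aux_h16 (d * q) N c₁ (by positivity) hN1 hcon
    have hqS : 2 * (q : ℝ) * S ≤ N * (d * q) ^ 2 := by
      have := mul_le_mul_of_nonneg_right hS2q hq0.le
      nlinarith
    have hSeT : S * Real.exp T ≤ c₁ / 8 := by
      rw [hT4]
      have heq : S * (4 * (q : ℝ) / c₁) = 4 * q * S / c₁ := by ring
      rw [heq, div_le_div_iff₀ hc₁pos (by norm_num : (0:ℝ) < 8)]
      linarith [hqS, h16]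
    obtain ⟨hwl, hw0, hwsum⟩ := key_w n α rα hrG hrP hrα p q hpq
    obtain ⟨w, hwdef⟩ : ∃ x, x = rα.mulVec (vecPQ n p q) := ⟨_, rfl⟩
    rw [← hwdef] at hwl hw0 hwsum
    have hw0' : w 0 = (q : ℝ) - S := by rw [hw0, hSdef]; ring
    have hcosh0 : (0 : ℝ) ≤ Real.cosh T := (Real.cosh_pos (x := T)).le
    have hcoshle : Real.cosh T ≤ Real.exp T := by
      rw [Real.cosh_eq]
      nlinarith [Real.exp_le_exp.2 (neg_le_self hT0)]
    have hsinh0 : (0 : ℝ) ≤ Real.sinh T := Real.sinh_nonneg_iff.2 hT0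
    have hsinhle : Real.sinh T ≤ Real.exp T := by
      rw [Real.sinh_eq]; nlinarith [Real.exp_pos (-T)]
    have hScosh0 : (0 : ℝ) ≤ S * Real.cosh T := mul_nonneg hS_nonneg hcosh0
    have hScosh : S * Real.cosh T ≤ c₁ / 8 :=
      le_trans (mul_le_mul_of_nonneg_left hcoshle hS_nonneg) hSeT
    have hSsinh0 : (0 : ℝ) ≤ S * Real.sinh T := mul_nonneg hS_nonneg hsinh0
    have hSsinh : S * Real.sinh T ≤ c₁ / 8 :=
      le_trans (mul_le_mul_of_nonneg_left hsinhle hS_nonneg) hSeT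
    have ha_bound : |(gFlow n T).mulVec w 0| ≤ 3 * c₁ / 8 := by
      rw [gFlow_apply_zero, hw0', hwl]
      have he : Real.cosh T * ((q : ℝ) - S) - Real.sinh T * q
          = (q : ℝ) * Real.exp (-T) - S * Real.cosh T := by
        rw [Real.sinh_eq, Real.cosh_eq, Real.exp_neg]
        field_simp
        ring
      rw [he, hqeT]
      exact (aux_ab _ _ hScosh0 hScosh hc₁pos).1
    have hb_bound : |(gFlow n T).mulVec w (Fin.last (n + 1))| ≤ 3 * c₁ / 8 := by
      rw [gFlow_apply_last, hw0', hwl]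
      have he : -Real.sinh T * ((q : ℝ) - S) + Real.cosh T * q
          = (q : ℝ) * Real.exp (-T) + S * Real.sinh T := by
        rw [Real.sinh_eq, Real.cosh_eq, Real.exp_neg]
        field_simp
        ring
      rw [he, hqeT]
      exact (aux_ab _ _ hSsinh0 hSsinh hc₁pos).2
    have hmid : ∀ i : Fin (n + 1), i ≠ 0 → |w i.castSucc| ≤ 3 * c₁ / 8 := by
      intro i hi
      have hpair : w i.castSucc ^ 2 + w (0 : Fin (n + 2)) ^ 2 ≤ (q : ℝ) ^ 2 := by
        have hsub : ∑ j ∈ ({i, 0} : Finset (Fin (n + 1))), w j.castSucc ^ 2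
            ≤ ∑ j : Fin (n + 1), w j.castSucc ^ 2 :=
          Finset.sum_le_sum_of_subset_of_nonneg (Finset.subset_univ _)
            fun (j : Fin (n + 1)) _ _ => sq_nonneg _
        rw [Finset.sum_pair hi, hwsum] at hsub
        simpa using hsub
      rw [hw0'] at hpair
      exact aux_mid _ S c₁ N (d * q) q hS_nonneg hpair hqS h16 hc₁pos
    have hnorm : ‖(gFlow n T * rα).mulVec (vecPQ n p q)‖ ≤ 3 * c₁ / 8 := by
      rw [← Matrix.mulVec_mulVec, ← hwdef]
      rw [pi_norm_le_iff_of_nonneg (by positivity)]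
      intro k
      rw [Real.norm_eq_abs]
      refine Fin.lastCases ?_ ?_ k
      · exact hb_bound
      · intro i
        by_cases hi : i = 0
        · subst hi; rw [Fin.castSucc_zero]; exact ha_bound
        · rw [gFlow_apply_mid n T w i hi]; exact hmid i hi
    have hmem := vecPQ_mem_lambda0 n p q hpq
    have hne : vecPQ n p q ≠ 0 := by
      intro h
      have h2 := congrFun h (Fin.last (n + 1))
      simp only [vecPQ, Fin.snoc_last, Pi.zero_apply] at h2
      exact absurd h2 (by exact_mod_cast hq.ne')
    have hfinal := hbound T hT0 (vecPQ n p q) hmem hne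
    linarith
end
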